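/- For positive integers n and i with 1 ≤ i ≤ n, the sum of the multinomial coefficients n!/(l1!·l2!···li!·(n−l1−···−li)!) over all tuples (l1,...,li) of positive integers with l1+···+li ≤ n equals i!·S(n+1, i+1), where S denotes the Stirling number of the second kind. -/

import Mathlib

/-- Stirling numbers of the second kind: `stirlingSecond n k` is the number of partitions of
an `n`-element set into `k` nonempty blocks. -/
def stirlingSecond : ℕ → ℕ → ℕ
  | 0, 0 => 1
  | 0, _ + 1 => 0
  | _ + 1, 0 => 0
  | n + 1, k + 1 => (k + 1) * stirlingSecond n (k + 1) + stirlingSecond n k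

@[simp] lemma st_zero_zero : stirlingSecond 0 0 = 1 := rfl
@[simp] lemma st_zero_succ (k : ℕ) : stirlingSecond 0 (k+1) = 0 := rfl
@[simp] lemma st_succ_zero (n : ℕ) : stirlingSecond (n+1) 0 = 0 := rfl
lemma st_succ_succ (n k : ℕ) :
    stirlingSecond (n+1) (k+1) = (k + 1) * stirlingSecond n (k + 1) + stirlingSecond n k := rfl

lemma st_one (k : ℕ) : stirlingSecond (k+1) 1 = 1 := by
  induction k with
  | zero => rfl
  | succ k ih => rw [st_succ_succ, ih]; simp

-- identity (III): (i+1) * S(k,i+1) = ∑_{t<k} C(k,t+1) * S(k-(t+1), i)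
lemma identIII : ∀ k i : ℕ, (i+1) * stirlingSecond k (i+1)
    = ∑ t ∈ Finset.range k, (k.choose (t+1)) * stirlingSecond (k - (t+1)) i := by
  intro k
  induction k with
  | zero => intro i; simp
  | succ k ih =>
    intro i
    have pascal : ∀ t, (k+1).choose (t+1) = k.choose t + k.choose (t+1) :=
      fun t => Nat.choose_succ_succ' k t
    have split : ∑ t ∈ Finset.range (k+1), ((k+1).choose (t+1)) * stirlingSecond (k+1 - (t+1)) i
        = (∑ t ∈ Finset.range (k+1), (k.choose t) * stirlingSecond (k - t) i)
          + ∑ t ∈ Finset.range (k+1), (k.choose (t+1)) * stirlingSecond (k - t) i := by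
      rw [← Finset.sum_add_distrib]
      refine Finset.sum_congr rfl fun t ht => ?_
      rw [pascal, add_mul, Nat.succ_sub_succ]
    rw [split]
    -- SumB = ∑_{t<k+1} C(k,t) S(k-t,i) = S(k,i) + (i+1) S(k,i+1)
    have hB : ∑ t ∈ Finset.range (k+1), (k.choose t) * stirlingSecond (k - t) i
        = (i+1) * stirlingSecond k (i+1) + stirlingSecond k i := by
      rw [Finset.sum_range_succ' (fun t => (k.choose t) * stirlingSecond (k - t) i) k]
      rw [ih i]
      simp
    -- SumA = ∑_{t<k+1} C(k,t+1) S(k-t,i); last term t=k has choose = 0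
    have hA0 : ∑ t ∈ Finset.range (k+1), (k.choose (t+1)) * stirlingSecond (k - t) i
        = ∑ t ∈ Finset.range k, (k.choose (t+1)) * stirlingSecond ((k - (t+1)) + 1) i := by
      rw [Finset.sum_range_succ]
      simp only [Nat.choose_succ_self, zero_mul, add_zero]
      refine Finset.sum_congr rfl fun t ht => ?_
      have h' : k - t = k - (t+1) + 1 := by
        have := Finset.mem_range.mp ht; omega
      rw [h']
    rw [hB, hA0]
    cases i with
    | zero =>
      have : ∑ t ∈ Finset.range k, (k.choose (t+1)) * stirlingSecond ((k - (t+1)) + 1) 0 = 0 := by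
        apply Finset.sum_eq_zero; intro t ht; simp
      rw [this, st_succ_succ]
      ring
    | succ j =>
      have expand : ∑ t ∈ Finset.range k, (k.choose (t+1)) * stirlingSecond ((k - (t+1)) + 1) (j+1)
          = (j+1) * ((j+1+1) * stirlingSecond k (j+1+1)) + ((j+1) * stirlingSecond k (j+1)) := by
        have step : ∀ t ∈ Finset.range k,
            (k.choose (t+1)) * stirlingSecond ((k - (t+1)) + 1) (j+1)
            = (j+1) * ((k.choose (t+1)) * stirlingSecond (k - (t+1)) (j+1))
              + (k.choose (t+1)) * stirlingSecond (k - (t+1)) j := by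
          intro t ht
          rw [st_succ_succ]
          ring
        rw [Finset.sum_congr rfl step, Finset.sum_add_distrib, ← Finset.mul_sum,
          ← ih (j+1), ← ih j]
      rw [expand, st_succ_succ]
      ring

-- identity (II): S(n+1, i+1) = ∑_{k ≤ n} C(n,k) S(k,i)
lemma identII : ∀ n i : ℕ, stirlingSecond (n+1) (i+1)
    = ∑ k ∈ Finset.range (n+1), (n.choose k) * stirlingSecond k i := by
  intro n
  induction n with
  | zero => intro i; simp [st_succ_succ]
  | succ n ih =>
    intro i
    have split : ∑ k ∈ Finset.range (n+2), ((n+1).choose k) * stirlingSecond k i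
        = (∑ k ∈ Finset.range (n+1), (n.choose k) * stirlingSecond k i)
          + ∑ k ∈ Finset.range (n+1), (n.choose k) * stirlingSecond (k+1) i := by
      rw [Finset.sum_range_succ' (fun k => ((n+1).choose k) * stirlingSecond k i) (n+1)]
      have e1 : ∀ k ∈ Finset.range (n+1),
          ((n+1).choose (k+1)) * stirlingSecond (k+1) i
          = (n.choose (k+1)) * stirlingSecond (k+1) i + (n.choose k) * stirlingSecond (k+1) i := by
        intro k hk
        rw [Nat.choose_succ_succ' n k]; ring
      rw [Finset.sum_congr rfl e1, Finset.sum_add_distrib]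
      have e2 : ∑ k ∈ Finset.range (n+1), (n.choose (k+1)) * stirlingSecond (k+1) i
          + (n+1).choose 0 * stirlingSecond 0 i
          = ∑ k ∈ Finset.range (n+1), (n.choose k) * stirlingSecond k i := by
        rw [Finset.sum_range_succ (fun k => (n.choose (k+1)) * stirlingSecond (k+1) i) n,
          Finset.sum_range_succ' (fun k => (n.choose k) * stirlingSecond k i) n]
        simp [Nat.choose_succ_self]
      omega
    rw [split, ← ih i]
    cases i with
    | zero =>
      have z : ∑ k ∈ Finset.range (n+1), (n.choose k) * stirlingSecond (k+1) 0 = 0 := by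
        apply Finset.sum_eq_zero; intro k hk; simp
      rw [z, st_succ_succ, st_succ_succ]
      simp
    | succ j =>
      have expand : ∑ k ∈ Finset.range (n+1), (n.choose k) * stirlingSecond (k+1) (j+1)
          = (j+1) * stirlingSecond (n+1) (j+2) + stirlingSecond (n+1) (j+1) := by
        have step : ∀ k ∈ Finset.range (n+1),
            (n.choose k) * stirlingSecond (k+1) (j+1)
            = (j+1) * ((n.choose k) * stirlingSecond k (j+1)) + (n.choose k) * stirlingSecond k j := by
          intro k hk; rw [st_succ_succ]; ring
        rw [Finset.sum_congr rfl step, Finset.sum_add_distrib, ← Finset.mul_sum,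
          ← ih (j+1), ← ih j]
      rw [expand, st_succ_succ, st_succ_succ]
      ring

open Finset in
/-- Sum of multinomial coefficients over positive `i`-tuples summing to `k`
(= number of surjections from a `k`-set onto an `i`-set). -/
def surjCount (i k : ℕ) : ℕ :=
  ∑ f ∈ (Finset.Nat.antidiagonalTuple i k).filter (fun f => ∀ j, 1 ≤ f j),
    Nat.multinomial Finset.univ f

@[simp] lemma surjCount_zero_zero : surjCount 0 0 = 1 := by
  simp [surjCount, Finset.Nat.antidiagonalTuple_zero_zero]

@[simp] lemma surjCount_zero_succ (k : ℕ) : surjCount 0 (k+1) = 0 := by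
  simp [surjCount, Finset.Nat.antidiagonalTuple_zero_succ]

lemma multinomial_cons {i : ℕ} (a : ℕ) (g : Fin i → ℕ) :
    Nat.multinomial Finset.univ (Fin.cons a g : Fin (i+1) → ℕ)
      = (a + ∑ j, g j).choose a * Nat.multinomial Finset.univ g := by
  have hpos : 0 < a.factorial * ∏ j, (g j).factorial :=
    Nat.mul_pos a.factorial_pos (Finset.prod_pos fun j _ => (g j).factorial_pos)
  apply Nat.eq_of_mul_eq_mul_left hpos
  have h1 := Nat.multinomial_spec Finset.univ (Fin.cons a g : Fin (i+1) → ℕ)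
  rw [Fin.prod_univ_succ, Fin.sum_univ_succ] at h1
  simp only [Fin.cons_zero, Fin.cons_succ] at h1
  have h2 := Nat.multinomial_spec Finset.univ g
  have h3 : (a + ∑ j, g j).choose a * a.factorial * (∑ j, g j).factorial
      = (a + ∑ j, g j).factorial := by
    have := Nat.choose_mul_factorial_mul_factorial (Nat.le_add_right a (∑ j, g j))
    simpa using this
  calc a.factorial * (∏ j, (g j).factorial)
        * Nat.multinomial Finset.univ (Fin.cons a g : Fin (i+1) → ℕ)
      = (a.factorial * ∏ j, (g j).factorial)
        * Nat.multinomial Finset.univ (Fin.cons a g : Fin (i+1) → ℕ) := by ring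
    _ = (a + ∑ j, g j).factorial := h1
    _ = (a + ∑ j, g j).choose a * a.factorial * (∑ j, g j).factorial := h3.symm
    _ = (a + ∑ j, g j).choose a * a.factorial
        * ((∏ j, (g j).factorial) * Nat.multinomial Finset.univ g) := by rw [h2]
    _ = a.factorial * (∏ j, (g j).factorial)
        * ((a + ∑ j, g j).choose a * Nat.multinomial Finset.univ g) := by ring

-- peel off the first coordinate
lemma surjCount_succ (i k : ℕ) :
    surjCount (i+1) k = ∑ m ∈ Finset.range k, (k.choose (m+1)) * surjCount i (k - (m+1)) := by
  classical
  unfold surjCount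
  rw [Finset.sum_congr rfl (fun m _ => Finset.mul_sum (a := (k.choose (m+1))) ..)]
  rw [Finset.sum_sigma' (Finset.range k)
    (fun m => (Finset.Nat.antidiagonalTuple i (k - (m+1))).filter (fun f => ∀ j, 1 ≤ f j))
    (fun m f => (k.choose (m+1)) * Nat.multinomial Finset.univ f)]
  refine (Finset.sum_bij' (fun p _ => Fin.cons (p.1 + 1) p.2)
    (fun f _ => ⟨f 0 - 1, Fin.tail f⟩) ?_ ?_ ?_ ?_ ?_).symm
  · rintro ⟨m, g⟩ hp
    simp only [Finset.mem_sigma, Finset.mem_range, Finset.mem_filter,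
      Finset.Nat.mem_antidiagonalTuple] at hp ⊢
    obtain ⟨hm, hg, hpos⟩ := hp
    refine ⟨?_, ?_⟩
    · rw [Fin.sum_cons, hg]; omega
    · intro j
      refine Fin.cases ?_ ?_ j
      · simp
      · intro j'; simpa using hpos j'
  · intro f hf
    simp only [Finset.mem_filter, Finset.Nat.mem_antidiagonalTuple] at hf
    obtain ⟨hsum, hpos⟩ := hf
    have h0 : 1 ≤ f 0 := hpos 0
    have hsum' : f 0 + ∑ j, Fin.tail f j = k := by
      rw [← hsum, Fin.sum_univ_succ]; rfl
    simp only [Finset.mem_sigma, Finset.mem_range, Finset.mem_filter,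
      Finset.Nat.mem_antidiagonalTuple]
    refine ⟨by omega, by omega, fun j => hpos j.succ⟩
  · rintro ⟨m, g⟩ hp
    simp only [Fin.cons_zero, Fin.tail_cons, Nat.add_sub_cancel]
  · intro f hf
    simp only [Finset.mem_filter, Finset.Nat.mem_antidiagonalTuple] at hf
    have h0 : 1 ≤ f 0 := hf.2 0
    have h2 : f 0 - 1 + 1 = f 0 := by omega
    show Fin.cons (f 0 - 1 + 1) (Fin.tail f) = f
    rw [h2, Fin.cons_self_tail]
  · rintro ⟨m, g⟩ hp
    simp only [Finset.mem_sigma, Finset.mem_range, Finset.mem_filter,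
      Finset.Nat.mem_antidiagonalTuple] at hp
    obtain ⟨hm, hg, -⟩ := hp
    show (k.choose (m+1)) * Nat.multinomial Finset.univ g
      = Nat.multinomial Finset.univ (Fin.cons (m + 1) g : Fin (i+1) → ℕ)
    have hmk : m + 1 + (k - (m + 1)) = k := by omega
    rw [multinomial_cons, hg, hmk]

lemma surjCount_eq (i : ℕ) : ∀ k, surjCount i k = i.factorial * stirlingSecond k i := by
  induction i with
  | zero =>
    intro k
    cases k with
    | zero => simp
    | succ k => simp
  | succ i ih =>
    intro k
    rw [surjCount_succ]
    have : ∀ m ∈ Finset.range k, (k.choose (m+1)) * surjCount i (k - (m+1))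
        = i.factorial * ((k.choose (m+1)) * stirlingSecond (k - (m+1)) i) := by
      intro m hm; rw [ih]; ring
    rw [Finset.sum_congr rfl this, ← Finset.mul_sum, ← identIII k i,
      Nat.factorial_succ]
    ring

lemma div_term {n k i : ℕ} (g : Fin i → ℕ) (hg : ∑ j, g j = k) (hk : k ≤ n) :
    n.factorial / ((∏ j, (g j).factorial) * (n - k).factorial)
      = n.choose k * Nat.multinomial Finset.univ g := by
  apply Nat.div_eq_of_eq_mul_left
  · exact Nat.mul_pos (Finset.prod_pos fun j _ => (g j).factorial_pos) (n - k).factorial_pos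
  · have spec := Nat.multinomial_spec Finset.univ g
    rw [hg] at spec
    calc n.factorial = n.choose k * k.factorial * (n - k).factorial :=
          (Nat.choose_mul_factorial_mul_factorial hk).symm
      _ = n.choose k * ((∏ j, (g j).factorial) * Nat.multinomial Finset.univ g)
          * (n - k).factorial := by rw [spec]
      _ = n.choose k * Nat.multinomial Finset.univ g
          * ((∏ j, (g j).factorial) * (n - k).factorial) := by ring

open Fin.NatCast in
lemma lhs_eq (n i : ℕ) :
    ∑ f ∈ Finset.univ.filter
        (fun f : Fin i → Fin (n + 1) => (∀ j, 1 ≤ (f j : ℕ)) ∧ ∑ j, (f j : ℕ) ≤ n),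
      n.factorial / ((∏ j, ((f j : ℕ)).factorial) * (n - ∑ j, (f j : ℕ)).factorial)
      = ∑ k ∈ Finset.range (n+1), (n.choose k) * surjCount i k := by
  classical
  unfold surjCount
  rw [Finset.sum_congr rfl (fun k _ => Finset.mul_sum (a := (n.choose k)) ..)]
  rw [Finset.sum_sigma' (Finset.range (n+1))
    (fun k => (Finset.Nat.antidiagonalTuple i k).filter (fun f => ∀ j, 1 ≤ f j))
    (fun k f => (n.choose k) * Nat.multinomial Finset.univ f)]
  refine (Finset.sum_bij' (fun p _ => fun j => ((p.2 j : ℕ) : Fin (n+1)))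
    (fun f _ => ⟨∑ j, (f j : ℕ), fun j => (f j : ℕ)⟩) ?_ ?_ ?_ ?_ ?_).symm
  · rintro ⟨k, g⟩ hp
    simp only [Finset.mem_sigma, Finset.mem_range, Finset.mem_filter,
      Finset.Nat.mem_antidiagonalTuple] at hp
    obtain ⟨hk, hg, hpos⟩ := hp
    have hlt : ∀ j, g j < n + 1 := by
      intro j
      have : g j ≤ ∑ j', g j' :=
        Finset.single_le_sum (f := g) (fun _ _ => Nat.zero_le _) (Finset.mem_univ j)
      omega
    have hval : ∀ j, (((g j : ℕ) : Fin (n+1)) : ℕ) = g j := fun j => Fin.val_cast_of_lt (hlt j)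
    simp only [Finset.mem_filter, Finset.mem_univ, true_and, hval]
    exact ⟨fun j => hpos j, by omega⟩
  · intro f hf
    simp only [Finset.mem_filter, Finset.mem_univ, true_and] at hf
    simp only [Finset.mem_sigma, Finset.mem_range, Finset.mem_filter,
      Finset.Nat.mem_antidiagonalTuple]
    refine ⟨by omega, ?_, hf.1⟩
    trivial
  · rintro ⟨k, g⟩ hp
    simp only [Finset.mem_sigma, Finset.mem_range, Finset.mem_filter,
      Finset.Nat.mem_antidiagonalTuple] at hp
    obtain ⟨hk, hg, hpos⟩ := hp
    have hlt : ∀ j, g j < n + 1 := by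
      intro j
      have : g j ≤ ∑ j', g j' :=
        Finset.single_le_sum (f := g) (fun _ _ => Nat.zero_le _) (Finset.mem_univ j)
      omega
    have hval : ∀ j, (((g j : ℕ) : Fin (n+1)) : ℕ) = g j := fun j => Fin.val_cast_of_lt (hlt j)
    refine Sigma.ext ?_ (heq_of_eq ?_)
    · show (∑ j, (((g j : ℕ) : Fin (n+1)) : ℕ)) = k
      rw [Finset.sum_congr rfl (fun j _ => hval j)]
      exact hg
    · exact funext hval
  · intro f hf
    funext j
    exact Fin.cast_val_eq_self (f j)
  · rintro ⟨k, g⟩ hp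
    simp only [Finset.mem_sigma, Finset.mem_range, Finset.mem_filter,
      Finset.Nat.mem_antidiagonalTuple] at hp
    obtain ⟨hk, hg, hpos⟩ := hp
    have hlt : ∀ j, g j < n + 1 := by
      intro j
      have : g j ≤ ∑ j', g j' :=
        Finset.single_le_sum (f := g) (fun _ _ => Nat.zero_le _) (Finset.mem_univ j)
      omega
    have hval : ∀ j, (((g j : ℕ) : Fin (n+1)) : ℕ) = g j := fun j => Fin.val_cast_of_lt (hlt j)
    simp only [hval]
    rw [hg]
    exact (div_term g hg (by omega)).symm

theorem stmt4 (n i : ℕ) (h1 : 1 ≤ i) (h2 : i ≤ n) :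
    ∑ f ∈ Finset.univ.filter
        (fun f : Fin i → Fin (n + 1) => (∀ j, 1 ≤ (f j : ℕ)) ∧ ∑ j, (f j : ℕ) ≤ n),
      n.factorial / ((∏ j, ((f j : ℕ)).factorial) * (n - ∑ j, (f j : ℕ)).factorial)
      = i.factorial * stirlingSecond (n + 1) (i + 1) := by
  rw [lhs_eq, identII n i, Finset.mul_sum]
  refine Finset.sum_congr rfl fun k _ => ?_
  rw [surjCount_eq]
  ring
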